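/- Let R be a Noetherian N-graded ring with R_0 a field, and let R^♮ = ⊕_{t≥0} R_{≥t} be the Rees-type algebra of the filtration by R_{≥t}. If R^♮ is Noetherian, then there exists n ≥ 1 such that R_{≥nt} = (R_{≥n})^t for every t ≥ 1. -/

import Mathlib

open Polynomial Finset

section Aux

variable {R : Type*} [CommRing R] (𝒜 : ℕ → AddSubgroup R) [GradedRing 𝒜] (I : ℕ → Ideal R)
variable (hI : ∀ (t : ℕ) (x : R), x ∈ I t ↔ ∀ i : ℕ, i < t → (DirectSum.decompose 𝒜 x i : R) = 0)

include hI

lemma I_antitone' {a b : ℕ} (h : a ≤ b) : I b ≤ I a := fun x hx =>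
  (hI a x).2 fun i hi => (hI b x).1 hx i (lt_of_lt_of_le hi h)

lemma I_zero' : I 0 = ⊤ :=
  eq_top_iff.2 fun x _ => (hI 0 x).2 fun i hi => absurd hi (Nat.not_lt_zero i)

lemma mem_I_of_mem_graded' {d m : ℕ} (h : m ≤ d) {x : R} (hx : x ∈ 𝒜 d) : x ∈ I m :=
  (hI m x).2 fun i hi => DirectSum.decompose_of_mem_ne 𝒜 hx (by omega)

lemma I_mul' {a b : ℕ} {x z : R} (hx : x ∈ I a) (hz : z ∈ I b) : x * z ∈ I (a + b) := by
  classical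
  have hxs := DirectSum.sum_support_decompose 𝒜 x
  have hzs := DirectSum.sum_support_decompose 𝒜 z
  rw [← hxs, ← hzs, Finset.sum_mul_sum]
  apply Ideal.sum_mem
  intro i _
  apply Ideal.sum_mem
  intro j _
  by_cases hia : i < a
  · rw [(hI a x).1 hx i hia, zero_mul]; exact zero_mem _
  · by_cases hjb : j < b
    · rw [(hI b z).1 hz j hjb, mul_zero]; exact zero_mem _
    · exact mem_I_of_mem_graded' 𝒜 I hI (by omega)
        (SetLike.mul_mem_graded (SetLike.coe_mem _) (SetLike.coe_mem _))

lemma I_pow' {d : ℕ} {x : R} (hx : x ∈ I d) (c : ℕ) : x ^ c ∈ I (c * d) := by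
  induction c with
  | zero => rw [pow_zero, Nat.zero_mul, I_zero' 𝒜 I hI]; trivial
  | succ c ih =>
      have h2 : (c+1) * d = c * d + d := by ring
      rw [h2, pow_succ]
      exact I_mul' 𝒜 I hI ih hx

lemma I_prod' {ι : Type*} [Fintype ι] (y : ι → R) (e : ι → ℕ) (hy : ∀ j, y j ∈ I (e j))
    (a : ι → ℕ) (s : Finset ι) : (∏ j ∈ s, y j ^ a j) ∈ I (∑ j ∈ s, a j * e j) := by
  classical
  induction s using Finset.induction with
  | empty => rw [Finset.prod_empty, Finset.sum_empty, I_zero' 𝒜 I hI]; trivial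
  | insert _ _ hj ih =>
      rw [Finset.prod_insert hj, Finset.sum_insert hj]
      exact I_mul' 𝒜 I hI (I_pow' 𝒜 I hI (hy _) _) ih

lemma I_pow_le' (n t : ℕ) : (I n) ^ t ≤ I (n * t) := by
  induction t with
  | zero => rw [pow_zero, Nat.mul_zero, I_zero' 𝒜 I hI, Ideal.one_eq_top]
  | succ t ih =>
      rw [pow_succ]
      refine Ideal.mul_le.2 fun x hx z hz => ?_
      have h2 : n * (t+1) = n * t + n := by ring
      rw [h2]
      exact I_mul' 𝒜 I hI (ih hx) hz

end Aux

lemma exists_le_sum' {ι : Type*} [Fintype ι] (q : ι → ℕ) (m : ℕ) (h : m ≤ ∑ j, q j) :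
    ∃ g : ι → ℕ, (∀ j, g j ≤ q j) ∧ ∑ j, g j = m := by
  classical
  induction m with
  | zero => exact ⟨0, fun j => Nat.zero_le _, by simp⟩
  | succ m ih =>
      obtain ⟨g, hg, hsum⟩ := ih (le_trans (Nat.le_succ m) h)
      have hex : ∃ j, g j < q j := by
        by_contra hc
        push_neg at hc
        have : ∑ j, q j ≤ ∑ j, g j := Finset.sum_le_sum fun j _ => hc j
        omega
      obtain ⟨j, hj⟩ := hex
      refine ⟨Function.update g j (g j + 1), fun i => ?_, ?_⟩
      · by_cases hij : i = j
        · subst hij; rw [Function.update_self]; omega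
        · rw [Function.update_of_ne hij]; exact hg i
      · have h1 : ∑ i, Function.update g j (g j + 1) i
            = (g j + 1) + ∑ i ∈ Finset.univ \ {j}, g i :=
          Finset.sum_update_of_mem (Finset.mem_univ j) g (g j + 1)
        have h2 : ∑ i ∈ Finset.univ.erase j, g i + g j = ∑ i, g i :=
          Finset.sum_erase_add _ _ (Finset.mem_univ j)
        rw [Finset.erase_eq] at h2
        omega

lemma exists_block' {ι : Type*} [Fintype ι] [Nonempty ι] (e : ι → ℕ) (he : ∀ j, 1 ≤ e j)
    (L : ℕ) (hL : 1 ≤ L) (hdvd : ∀ j, e j ∣ L) (a : ι → ℕ) (t : ℕ) (ht : 2 ≤ t)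
    (h : Fintype.card ι * L * t ≤ ∑ j, a j * e j) :
    ∃ b : ι → ℕ, (∀ j, b j ≤ a j) ∧ ∑ j, b j * e j = Fintype.card ι * L := by
  classical
  set k := Fintype.card ι with hk
  have hk1 : 1 ≤ k := Fintype.card_pos
  set bb : ι → ℕ := fun j => L / e j with hbb
  have hbbe : ∀ j, bb j * e j = L := fun j => Nat.div_mul_cancel (hdvd j)
  set q : ι → ℕ := fun j => a j / bb j with hq
  set r : ι → ℕ := fun j => a j % bb j with hr
  have hsplit : ∀ j, a j * e j = q j * L + r j * e j := by
    intro j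
    have hdm := Nat.div_add_mod (a j) (bb j)
    calc a j * e j = (bb j * q j + r j) * e j := by rw [hq, hr]; rw [hdm]
    _ = q j * (bb j * e j) + r j * e j := by ring
    _ = q j * L + r j * e j := by rw [hbbe j]
  have hsum : ∑ j, a j * e j = (∑ j, q j) * L + ∑ j, r j * e j := by
    rw [Finset.sum_mul, ← Finset.sum_add_distrib]
    exact Finset.sum_congr rfl fun j _ => hsplit j
  have hkL : k * (L - 1) + k = k * L := by
    obtain ⟨L', rfl⟩ : ∃ L', L = L' + 1 := ⟨L - 1, by omega⟩
    simp [Nat.mul_succ]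
  have hrho : ∑ j, r j * e j + k ≤ k * L := by
    have hje : ∀ j, r j * e j ≤ L - 1 := by
      intro j
      have h1 : r j < bb j := Nat.mod_lt _ (by
        simp only [hbb]
        exact Nat.div_pos (Nat.le_of_dvd (by omega) (hdvd j)) (he j))
      have h2 : r j * e j ≤ (bb j - 1) * e j := Nat.mul_le_mul_right _ (by omega)
      have h3 : (bb j - 1) * e j + e j = bb j * e j := by
        obtain ⟨b', hb'⟩ : ∃ b', bb j = b' + 1 := ⟨bb j - 1, by omega⟩
        rw [hb']; simp [Nat.succ_mul]
      have h4 := hbbe j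
      have := he j
      omega
    have hbig : ∑ j, r j * e j ≤ ∑ _j : ι, (L - 1) := Finset.sum_le_sum fun j _ => hje j
    rw [Finset.sum_const, smul_eq_mul, Finset.card_univ, ← hk] at hbig
    omega
  have hQ : k ≤ ∑ j, q j := by
    by_contra hc
    push_neg at hc
    have h1 : (∑ j, q j) * L ≤ (k - 1) * L := Nat.mul_le_mul_right _ (by omega)
    have h4 : (k - 1) * L + L = k * L := by
      obtain ⟨k', hk'⟩ : ∃ k', k = k' + 1 := ⟨k - 1, by omega⟩
      rw [hk']; simp [Nat.succ_mul]
    have h3 : k * L * 2 ≤ k * L * t := Nat.mul_le_mul_left _ ht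
    omega
  obtain ⟨g, hg, hgsum⟩ := exists_le_sum' q k hQ
  refine ⟨fun j => g j * bb j, fun j => ?_, ?_⟩
  · calc g j * bb j ≤ q j * bb j := Nat.mul_le_mul_right _ (hg j)
    _ ≤ a j := by rw [hq]; exact Nat.div_mul_le_self _ _
  · have heq : ∀ j, g j * bb j * e j = g j * L := fun j => by rw [mul_assoc, hbbe j]
    rw [Finset.sum_congr rfl fun j _ => heq j, ← Finset.sum_mul, hgsum]

section Aux2

variable {R : Type*} [CommRing R] (𝒜 : ℕ → AddSubgroup R) [GradedRing 𝒜] (I : ℕ → Ideal R)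
variable (hI : ∀ (t : ℕ) (x : R), x ∈ I t ↔ ∀ i : ℕ, i < t → (DirectSum.decompose 𝒜 x i : R) = 0)

include hI

lemma block_lemma' {ι : Type*} [Fintype ι] [Nonempty ι] (y : ι → R) (e : ι → ℕ)
    (he : ∀ j, 1 ≤ e j) (hy : ∀ j, y j ∈ I (e j)) (L : ℕ) (hL : 1 ≤ L) (hdvd : ∀ j, e j ∣ L)
    (t : ℕ) (a : ι → ℕ) (h : Fintype.card ι * L * t ≤ ∑ j, a j * e j) :
    (∏ j, y j ^ a j) ∈ (I (Fintype.card ι * L)) ^ t := by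
  classical
  induction t generalizing a with
  | zero => rw [pow_zero, Ideal.one_eq_top]; trivial
  | succ t ih =>
      set n := Fintype.card ι * L with hn
      rcases Nat.eq_zero_or_pos t with rfl | ht
      · rw [pow_one]
        refine I_antitone' 𝒜 I hI ?_ (I_prod' 𝒜 I hI y e hy a Finset.univ)
        simpa using h
      · obtain ⟨b, hb, hbsum⟩ := exists_block' e he L hL hdvd a (t+1) (by omega) h
        have hsplit : ∀ j, a j = b j + (a j - b j) := fun j => by have := hb j; omega
        have hprod : (∏ j, y j ^ a j) = (∏ j, y j ^ (a j - b j)) * ∏ j, y j ^ b j := by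
          rw [← Finset.prod_mul_distrib]
          refine Finset.prod_congr rfl fun j _ => ?_
          rw [← pow_add]
          congr 1
          have := hb j
          omega
        have hsum2 : ∑ j, (a j - b j) * e j + ∑ j, b j * e j = ∑ j, a j * e j := by
          rw [← Finset.sum_add_distrib]
          refine Finset.sum_congr rfl fun j _ => ?_
          have := hb j
          have h1 : (a j - b j) * e j + b j * e j = (a j - b j + b j) * e j := by ring
          rw [h1, Nat.sub_add_cancel (hb j)]
        have hrest : n * t ≤ ∑ j, (a j - b j) * e j := by
          have hmul : n * (t + 1) = n * t + n := by ring
          rw [hmul] at h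
          omega
        have h1 : (∏ j, y j ^ (a j - b j)) ∈ (I n) ^ t := ih _ hrest
        have h2 : (∏ j, y j ^ b j) ∈ I n := by
          rw [← hn] at hbsum
          rw [← hbsum]
          exact I_prod' 𝒜 I hI y e hy b Finset.univ
        rw [hprod, pow_succ]
        exact Ideal.mul_mem_mul h1 h2

lemma span_lemma' {ι : Type*} [Fintype ι] (y : ι → R) (e : ι → ℕ) (he : ∀ j, 1 ≤ e j)
    (hrec : ∀ m, 1 ≤ m → ∀ x ∈ I m,
      ∃ c : ι → R, (∀ j, c j ∈ I (m - e j)) ∧ x = ∑ j, y j * c j) :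
    ∀ m, I m ≤ Ideal.span {z : R | ∃ a : ι → ℕ, m ≤ ∑ j, a j * e j ∧ z = ∏ j, y j ^ a j} := by
  classical
  intro m
  induction m using Nat.strong_induction_on with
  | _ m ih =>
    rcases Nat.eq_zero_or_pos m with rfl | hm
    · intro x _
      have h1 : (1 : R) ∈ Ideal.span {z : R | ∃ a : ι → ℕ,
          0 ≤ ∑ j, a j * e j ∧ z = ∏ j, y j ^ a j} :=
        Ideal.subset_span ⟨0, by simp⟩
      have := Ideal.mul_mem_left _ x h1
      rwa [mul_one] at this
    · intro x hx
      obtain ⟨c, hc, rfl⟩ := hrec m hm x hx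
      refine Ideal.sum_mem _ fun j _ => ?_
      have hcj : c j ∈ Ideal.span {z : R | ∃ a : ι → ℕ,
          m - e j ≤ ∑ j, a j * e j ∧ z = ∏ j, y j ^ a j} :=
        ih (m - e j) (by have := he j; omega) (hc j)
      -- now show y j * c j ∈ span for m
      refine Submodule.span_induction ?_ ?_ ?_ ?_ hcj
      · rintro z ⟨a, ha, rfl⟩
        refine Ideal.subset_span ⟨Function.update a j (a j + 1), ?_, ?_⟩
        · have h1 : ∑ i, (Function.update a j (a j + 1)) i * e i
              = (a j + 1) * e j + ∑ i ∈ Finset.univ \ {j}, a i * e i := by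
            have := Finset.sum_update_of_mem (Finset.mem_univ j)
              (fun i => a i * e i) ((a j + 1) * e j)
            rw [← this]
            refine Finset.sum_congr rfl fun i _ => ?_
            by_cases hij : i = j
            · subst hij; rw [Function.update_self, Function.update_self]
            · rw [Function.update_of_ne hij, Function.update_of_ne hij]
          have h2 : ∑ i, a i * e i
              = a j * e j + ∑ i ∈ Finset.univ \ {j}, a i * e i := by
            rw [← Finset.erase_eq]
            rw [← Finset.add_sum_erase _ _ (Finset.mem_univ j)]
          have h3 : (a j + 1) * e j = a j * e j + e j := by ring
          have := he j
          omega
        · have hfun : (fun i => y i ^ (Function.update a j (a j + 1)) i)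
              = Function.update (fun i => y i ^ a i) j (y j ^ (a j + 1)) := by
            funext i
            by_cases hij : i = j
            · subst hij; rw [Function.update_self, Function.update_self]
            · rw [Function.update_of_ne hij, Function.update_of_ne hij]
          refine Eq.symm ?_
          calc ∏ i, y i ^ (Function.update a j (a j + 1)) i
              = y j ^ (a j + 1) * ∏ i ∈ Finset.univ \ {j}, y i ^ a i := by
                rw [hfun]
                exact Finset.prod_update_of_mem (Finset.mem_univ j) _ _
            _ = y j * (y j ^ a j * ∏ i ∈ Finset.univ.erase j, y i ^ a i) := by
                rw [pow_succ, Finset.erase_eq]; ring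
            _ = y j * ∏ i, y i ^ a i := by
                congr 1
                exact Finset.mul_prod_erase Finset.univ (fun i => y i ^ a i)
                  (Finset.mem_univ j)
      · rw [mul_zero]; exact zero_mem _
      · intro z w _ _ hz hw
        rw [mul_add]; exact add_mem hz hw
      · intro r z _ hz
        rw [smul_eq_mul, ← mul_assoc, mul_comm (y j) r, mul_assoc]
        exact Ideal.mul_mem_left _ r hz

end Aux2

lemma coeff_mul_monomial'' {R : Type*} [CommRing R] (p : Polynomial R) (n c m) :
    (p * Polynomial.monomial n c).coeff m
      = if n ≤ m then p.coeff (m - n) * c else 0 := by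
  rw [← Polynomial.C_mul_X_pow_eq_monomial, ← mul_assoc, Polynomial.coeff_mul_X_pow']
  split_ifs with h
  · rw [Polynomial.coeff_mul_C]
  · rfl

/-- Let `R` be a Noetherian `ℕ`-graded ring with `R₀` a field, let `I t = R_{≥t}` be the ideal
of elements of degree `≥ t`, and let `N = R^♮ = ⊕_{t ≥ 0} R_{≥t}` be the Rees-type algebra of
the filtration (realized as the subalgebra `⊕ R_{≥t} Xᵗ` of `R[X]`).  If `R^♮` is Noetherian,
then there exists `n ≥ 1` with `R_{≥nt} = (R_{≥n})ᵗ` for every `t ≥ 1`. -/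
theorem rees_noetherian_power_of_filtration
    (R : Type*) [CommRing R] [IsNoetherianRing R]
    (𝒜 : ℕ → AddSubgroup R) [GradedRing 𝒜] (hk : IsField ↥(𝒜 0))
    (I : ℕ → Ideal R)
    (hI : ∀ (t : ℕ) (x : R), x ∈ I t ↔ ∀ i : ℕ, i < t → (DirectSum.decompose 𝒜 x i : R) = 0)
    (N : Subalgebra R (Polynomial R))
    (hN : ∀ p : Polynomial R, p ∈ N ↔ ∀ t : ℕ, p.coeff t ∈ I t)
    (hNoeth : IsNoetherianRing ↥N) :
    ∃ n : ℕ, 1 ≤ n ∧ ∀ t : ℕ, 1 ≤ t → I (n * t) = (I n) ^ t := by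
  classical
  set φ : ↥N →+* R :=
    (Polynomial.constantCoeff (R := R)).comp (Subalgebra.val N).toRingHom with hφ
  have hφ_apply : ∀ p : ↥N, φ p = (p : Polynomial R).coeff 0 := fun p => rfl
  set M : Ideal ↥N := RingHom.ker φ with hM
  obtain ⟨S, hS⟩ : M.FG := IsNoetherian.noetherian M
  have hmonoN : ∀ (c : R) (d : ℕ), c ∈ I d → (Polynomial.monomial d c : Polynomial R) ∈ N := by
    intro c d hc
    rw [hN]
    intro t
    rw [Polynomial.coeff_monomial]
    split_ifs with hdt
    · subst hdt; exact hc
    · exact zero_mem _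
  set G : Finset ↥N := S.biUnion (fun p =>
    (p : Polynomial R).support.image (fun d =>
      (⟨Polynomial.monomial d ((p : Polynomial R).coeff d),
        hmonoN _ _ ((hN _).1 p.2 d)⟩ : ↥N))) with hG
  have hSM : ∀ p ∈ S, p ∈ M := fun p hp => hS ▸ Ideal.subset_span hp
  have hGdata : ∀ g : {g // g ∈ G}, ∃ (d : ℕ) (c : R), 1 ≤ d ∧ c ∈ I d ∧
      ((g : ↥N) : Polynomial R) = Polynomial.monomial d c := by
    rintro ⟨g, hg⟩
    rw [hG, Finset.mem_biUnion] at hg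
    obtain ⟨p, hpS, hg⟩ := hg
    rw [Finset.mem_image] at hg
    obtain ⟨d, hd, rfl⟩ := hg
    refine ⟨d, (p : Polynomial R).coeff d, ?_, (hN _).1 p.2 d, rfl⟩
    have h0 : (p : Polynomial R).coeff 0 = 0 := by
      have := RingHom.mem_ker.1 (hSM p hpS)
      rwa [hφ_apply] at this
    have hne := Polynomial.mem_support_iff.1 hd
    rcases Nat.eq_zero_or_pos d with rfl | h
    · exact absurd h0 hne
    · exact h
  have hGM : Ideal.span (G : Set ↥N) = M := by
    apply le_antisymm
    · rw [Ideal.span_le]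
      intro g hg
      rw [Finset.mem_coe, hG, Finset.mem_biUnion] at hg
      obtain ⟨p, hpS, hg⟩ := hg
      rw [Finset.mem_image] at hg
      obtain ⟨d, hd, rfl⟩ := hg
      have h0 : (p : Polynomial R).coeff 0 = 0 := by
        have := RingHom.mem_ker.1 (hSM p hpS)
        rwa [hφ_apply] at this
      have hd0 : d ≠ 0 := fun h => (Polynomial.mem_support_iff.1 hd) (h ▸ h0)
      rw [SetLike.mem_coe, hM, RingHom.mem_ker, hφ_apply]
      simp only [Polynomial.coeff_monomial]
      rw [if_neg hd0]
    · rw [← hS, Ideal.span_le]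
      intro p hpS
      rw [Finset.mem_coe] at hpS
      have hsum : p = ∑ d ∈ (p : Polynomial R).support,
          (⟨Polynomial.monomial d ((p : Polynomial R).coeff d),
            hmonoN _ _ ((hN _).1 p.2 d)⟩ : ↥N) := by
        apply Subtype.ext
        rw [AddSubmonoidClass.coe_finset_sum]
        have := Polynomial.sum_monomial_eq (p : Polynomial R)
        rw [Polynomial.sum_def] at this
        exact this.symm
      rw [SetLike.mem_coe, hsum]
      refine Ideal.sum_mem _ fun d hd => Ideal.subset_span ?_
      rw [hG]
      exact Finset.mem_biUnion.2 ⟨p, hpS, Finset.mem_image.2 ⟨d, hd, rfl⟩⟩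
  -- choose data of generators
  choose D C hD hC hmono using hGdata
  set ι : Type _ := Option {g // g ∈ G} with hι
  set e : ι → ℕ := fun j => j.elim 1 D with he_def
  set y : ι → R := fun j => j.elim 0 C with hy_def
  have he : ∀ j, 1 ≤ e j := by
    rintro (_ | g)
    · exact le_refl 1
    · exact hD g
  have hy : ∀ j, y j ∈ I (e j) := by
    rintro (_ | g)
    · exact zero_mem _
    · exact hC g
  -- the recursion
  have hrec : ∀ m, 1 ≤ m → ∀ x ∈ I m,
      ∃ c : ι → R, (∀ j, c j ∈ I (m - e j)) ∧ x = ∑ j, y j * c j := by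
    intro m hm x hx
    have hxM : (⟨Polynomial.monomial m x, hmonoN _ _ hx⟩ : ↥N) ∈ M := by
      rw [hM, RingHom.mem_ker, hφ_apply]
      simp only [Polynomial.coeff_monomial]
      rw [if_neg (by omega)]
    rw [← hGM] at hxM
    obtain ⟨f, -, hf⟩ := Submodule.mem_span_finset.1 hxM
    have hcoe := congrArg (Subtype.val) hf
    rw [AddSubmonoidClass.coe_finset_sum] at hcoe
    simp only [smul_eq_mul, MulMemClass.coe_mul] at hcoe
    have hfx : (Polynomial.monomial m x : Polynomial R)
        = ∑ g ∈ G, ((f g : Polynomial R) * (g : Polynomial R)) := hcoe.symm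
    have hfx2 : (Polynomial.monomial m x : Polynomial R)
        = ∑ g ∈ G.attach, ((f g.1 : Polynomial R) * (g.1 : Polynomial R)) := by
      rw [hfx, ← Finset.sum_attach G (fun g => ((f g : Polynomial R) * (g : Polynomial R)))]
    have hxeq : x = ∑ g ∈ G.attach,
        (if D g ≤ m then ((f g.1 : Polynomial R)).coeff (m - D g) * C g else 0) := by
      have := congrArg (fun q => Polynomial.coeff q m) hfx2
      rw [Polynomial.coeff_monomial, if_pos rfl, Polynomial.finset_sum_coeff] at this
      rw [this]
      refine Finset.sum_congr rfl fun g _ => ?_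
      rw [hmono g, coeff_mul_monomial'']
    refine ⟨fun j => j.elim 0 (fun g =>
      if D g ≤ m then ((f g.1 : Polynomial R)).coeff (m - D g) else 0), ?_, ?_⟩
    · rintro (_ | g)
      · exact zero_mem _
      · simp only [Option.elim]
        split_ifs with h
        · exact (hN _).1 (f g.1).2 _
        · exact zero_mem _
    · rw [hxeq]
      rw [Fintype.sum_option]
      simp only [Option.elim, hy_def, zero_mul, zero_add]
      rw [Finset.univ_eq_attach]
      refine Finset.sum_congr rfl fun g _ => ?_
      split_ifs with h
      · ring
      · rw [mul_zero]
  -- the numbers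
  set L : ℕ := Finset.univ.lcm e with hLdef
  have hL : 1 ≤ L := by
    rcases Nat.eq_zero_or_pos L with h0 | h
    · exfalso
      rw [hLdef] at h0
      rw [Finset.lcm_eq_zero_iff] at h0
      obtain ⟨j, _, hj⟩ := h0
      have := he j
      omega
    · exact h
  have hdvd : ∀ j : ι, e j ∣ L := fun j => Finset.dvd_lcm (Finset.mem_univ j)
  set k : ℕ := Fintype.card ι with hkdef
  have hk1 : 1 ≤ k := Fintype.card_pos
  refine ⟨k * L, Nat.mul_pos hk1 hL, fun t ht => le_antisymm ?_ ?_⟩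
  · -- I (n*t) ≤ I n ^ t
    intro x hx
    have hx2 := span_lemma' 𝒜 I hI y e he hrec (k * L * t) hx
    refine Ideal.span_le.2 ?_ hx2
    rintro z ⟨a, ha, rfl⟩
    exact block_lemma' 𝒜 I hI y e he hy L hL hdvd t a ha
  · exact I_pow_le' 𝒜 I hI (k * L) t
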